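/- The number of 2-watermelons of length n (pairs of nonintersecting walks with steps ±1 starting at heights 0 and 2 and ending at heights k and k+2 for some k) is the Catalan number C_{n+1}. -/

import Mathlib

open PowerSeries Finset

/-- Generating function of the Catalan numbers `C_n = (1/(n+1))·binom(2n,n)`. -/
noncomputable def catGF : PowerSeries ℚ :=
  PowerSeries.mk fun n => (Nat.choose (2 * n) n : ℚ) / (n + 1)

/-- `D(t) = C(t) - 1`. -/
noncomputable def DGF : PowerSeries ℚ := catGF - 1

/-- A lattice walk of length `n` with steps `±1`. -/
def IsWalk (n : ℕ) (L : Fin (n + 1) → ℤ) : Prop :=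
  ∀ k : Fin n, |L k.succ - L k.castSucc| = 1

/-- Two walks intersect (share a common point at the same time). -/
def Meets {m : ℕ} (L L' : Fin m → ℤ) : Prop := ∃ k, L k = L' k

/-- All triples of walks of length `n` starting at heights `0, 2i, 2i+2j`. -/
def USet (i j n : ℕ) :
    Set ((Fin (n + 1) → ℤ) × (Fin (n + 1) → ℤ) × (Fin (n + 1) → ℤ)) :=
  {T | IsWalk n T.1 ∧ IsWalk n T.2.1 ∧ IsWalk n T.2.2 ∧
    T.1 0 = 0 ∧ T.2.1 0 = 2 * i ∧ T.2.2 0 = 2 * i + 2 * j}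

/-- Triples where `L₁` and `L₂` are nonintersecting. -/
def W12Set (i j n : ℕ) := {T ∈ USet i j n | ¬ Meets T.1 T.2.1}

/-- Triples where `L₂` and `L₃` are nonintersecting. -/
def W23Set (i j n : ℕ) := {T ∈ USet i j n | ¬ Meets T.2.1 T.2.2}

/-- Triples where `L₁` intersects `L₃`. -/
def M13Set (i j n : ℕ) := {T ∈ USet i j n | Meets T.1 T.2.2}

/-- Triples where `L₂` intersects both `L₁` and `L₃`. -/
def M1223Set (i j n : ℕ) :=
  {T ∈ USet i j n | Meets T.2.1 T.1 ∧ Meets T.2.1 T.2.2}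

/-- Vicious (pairwise nonintersecting) triples. -/
def VSet (i j n : ℕ) :=
  {T ∈ USet i j n | ¬ Meets T.1 T.2.1 ∧ ¬ Meets T.2.1 T.2.2 ∧ ¬ Meets T.1 T.2.2}

/-- Pairs of walks of length `n` starting at heights `0` and `2i`. -/
def PairSet (i n : ℕ) : Set ((Fin (n + 1) → ℤ) × (Fin (n + 1) → ℤ)) :=
  {P | IsWalk n P.1 ∧ IsWalk n P.2 ∧ P.1 0 = 0 ∧ P.2 0 = 2 * i}

/-- Intersecting pairs. -/
def MSet (i n : ℕ) := {P ∈ PairSet i n | Meets P.1 P.2}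

/-- Nonintersecting (vicious) pairs. -/
def NSet (i n : ℕ) := {P ∈ PairSet i n | ¬ Meets P.1 P.2}

/-- Converging pairs: never meet before time `n`, meet at time `n`. -/
def TSet (i n : ℕ) :=
  {P ∈ PairSet i n | (∀ k : Fin (n + 1), (k : ℕ) < n → P.1 k ≠ P.2 k) ∧
    P.1 (Fin.last n) = P.2 (Fin.last n)}

/-- 2-watermelons of length `n`. -/
def MelonSet (n : ℕ) : Set ((Fin (n + 1) → ℤ) × (Fin (n + 1) → ℤ)) :=
  {P | IsWalk n P.1 ∧ IsWalk n P.2 ∧ P.1 0 = 0 ∧ P.2 0 = 2 ∧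
    P.2 (Fin.last n) = P.1 (Fin.last n) + 2 ∧ ∀ k, P.1 k < P.2 k}

/-- Partial Dyck paths of length `2n` from height `2i` to `0`, strictly positive before the end. -/
def PDyckSet (i n : ℕ) : Set (Fin (2 * n + 1) → ℤ) :=
  {Q | IsWalk (2 * n) Q ∧ Q 0 = 2 * i ∧ Q (Fin.last (2 * n)) = 0 ∧
    ∀ k : Fin (2 * n + 1), (k : ℕ) < 2 * n → 0 < Q k}

/- ## Auxiliary development: bijection between 2-watermelons and Dyck words -/

namespace Stmt10Aux

open DyckStep List

def eps : DyckStep → ℤ | U => 1 | D => -1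

lemma eps_bound (s : DyckStep) : eps s = 1 ∨ eps s = -1 := by cases s <;> simp [eps]

def hgt (l : List DyckStep) : ℤ := (l.count U : ℤ) - l.count D

lemma hgt_append_singleton (l : List DyckStep) (s : DyckStep) :
    hgt (l ++ [s]) = hgt l + eps s := by
  cases s <;> simp [hgt, eps, List.count_append, List.count_singleton'] <;> ring

def cnt (l : List DyckStep) (i : ℕ) : ℤ := hgt (l.take i)

lemma cnt_zero (l : List DyckStep) : cnt l 0 = 0 := rfl

lemma cnt_succ (l : List DyckStep) (i : ℕ) (h : i < l.length) :
    cnt l (i+1) = cnt l i + eps l[i] := by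
  rw [cnt, cnt, List.take_succ, List.getElem?_eq_getElem h, Option.toList_some,
    hgt_append_singleton]

lemma cnt_full (l : List DyckStep) (i : ℕ) (h : l.length ≤ i) : cnt l i = hgt l := by
  rw [cnt, List.take_of_length_le h]

lemma cnt_nonneg_of_counts (l : List DyckStep)
    (hc : ∀ i, (l.take i).count D ≤ (l.take i).count U) (i : ℕ) : 0 ≤ cnt l i := by
  have := hc i
  rw [cnt, hgt]
  omega

def extW {n : ℕ} (L : Fin (n+1) → ℤ) (k : ℕ) : ℤ :=
  if h : k < n + 1 then L ⟨k, h⟩ else 0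

lemma extW_eq {n : ℕ} (L : Fin (n+1) → ℤ) (k : ℕ) (h : k < n+1) : extW L k = L ⟨k, h⟩ :=
  dif_pos h

lemma extW_zero {n : ℕ} (L : Fin (n+1) → ℤ) : extW L 0 = L 0 := by
  rw [extW_eq L 0 (by omega)]
  congr 1

lemma extW_last {n : ℕ} (L : Fin (n+1) → ℤ) : extW L n = L (Fin.last n) := by
  rw [extW_eq L n (by omega)]; rfl

lemma extW_fin {n : ℕ} (L : Fin (n+1) → ℤ) (k : Fin (n+1)) : extW L k.val = L k := by
  rw [extW_eq L k.val k.isLt]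

lemma walkStep {n : ℕ} {L : Fin (n+1) → ℤ} (hL : IsWalk n L) (k : ℕ) (hk : k < n) :
    extW L (k+1) - extW L k = 1 ∨ extW L (k+1) - extW L k = -1 := by
  have hk1 : k+1 < n+1 := Nat.succ_lt_succ hk
  have hk0 : k < n+1 := Nat.lt_succ_of_lt hk
  have h : |L ⟨k+1, hk1⟩ - L ⟨k, hk0⟩| = 1 := hL ⟨k, hk⟩
  have e1 : extW L (k+1) = L ⟨k+1, hk1⟩ := extW_eq L (k+1) hk1
  have e2 : extW L k = L ⟨k, hk0⟩ := extW_eq L k hk0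
  simp only [e1, e2]
  exact (abs_eq (by norm_num : (0:ℤ) ≤ 1)).mp h

/-! ### The forward map: melon to Dyck word -/

def wstep (n : ℕ) (P : (Fin (n+1) → ℤ) × (Fin (n+1) → ℤ)) (i : ℕ) : DyckStep :=
  if i = 0 then U
  else if i ≤ 2*n then
    if (i-1) % 2 = 0 then
      (if extW P.2 ((i-1)/2+1) - extW P.2 ((i-1)/2) = 1 then U else D)
    else
      (if extW P.1 ((i-1)/2+1) - extW P.1 ((i-1)/2) = 1 then D else U)
  else D

lemma wstep_zero (n P) : wstep n P 0 = U := by simp [wstep]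

lemma wstep_big (n P) (i : ℕ) (h : 2*n < i) : wstep n P i = D := by
  rw [wstep, if_neg (by omega), if_neg (by omega)]

lemma wstep_odd (n P) (k : ℕ) (hk : k < n) :
    wstep n P (2*k+1) = if extW P.2 (k+1) - extW P.2 k = 1 then U else D := by
  rw [wstep, if_neg (by omega), if_pos (by omega), if_pos (by omega)]
  norm_num

lemma wstep_even (n P) (k : ℕ) (hk : k < n) :
    wstep n P (2*k+2) = if extW P.1 (k+1) - extW P.1 k = 1 then D else U := by
  rw [wstep, if_neg (by omega), if_pos (by omega), if_neg (by omega)]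
  have h1 : (2*k+2-1)/2 = k := by omega
  rw [h1]

lemma eps_wstep_odd (n) {P} (hw : IsWalk n P.2) (k : ℕ) (hk : k < n) :
    eps (wstep n P (2*k+1)) = extW P.2 (k+1) - extW P.2 k := by
  rw [wstep_odd n P k hk]
  rcases walkStep hw k hk with h | h <;> rw [h] <;> simp [eps]

lemma eps_wstep_even (n) {P} (hw : IsWalk n P.1) (k : ℕ) (hk : k < n) :
    eps (wstep n P (2*k+2)) = extW P.1 k - extW P.1 (k+1) := by
  rw [wstep_even n P k hk]
  rcases walkStep hw k hk with h | h <;> rw [h] <;> simp [eps] <;> omega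

def melonList (n : ℕ) (P : (Fin (n+1) → ℤ) × (Fin (n+1) → ℤ)) : List DyckStep :=
  List.ofFn (fun i : Fin (2*n+2) => wstep n P i.val)

lemma length_melonList (n P) : (melonList n P).length = 2*n+2 := by
  simp [melonList]

lemma getElem_melonList (n P) (i : ℕ) (h : i < 2*n+2) :
    (melonList n P)[i]'(by rw [length_melonList]; exact h) = wstep n P i := by
  simp only [melonList, List.getElem_ofFn]

lemma cntM_succ (n P) (i : ℕ) (h : i < 2*n+2) :
    cnt (melonList n P) (i+1) = cnt (melonList n P) i + eps (wstep n P i) := by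
  rw [cnt_succ _ i (by rw [length_melonList]; exact h), getElem_melonList n P i h]

section Forward

variable {n : ℕ} {P : (Fin (n+1) → ℤ) × (Fin (n+1) → ℤ)} (hP : P ∈ MelonSet n)
include hP

lemma melon_gap : ∀ k, k ≤ n →
    (extW P.2 k - extW P.1 k) % 2 = 0 ∧ 2 ≤ extW P.2 k - extW P.1 k := by
  obtain ⟨hw1, hw2, h10, h20, hend, hlt⟩ := hP
  intro k
  induction k with
  | zero =>
    intro _
    rw [extW_zero, extW_zero, h10, h20]
    norm_num
  | succ k ih =>
    intro hk
    obtain ⟨hpar, hge⟩ := ih (by omega)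
    rcases walkStep hw1 k (by omega) with h1 | h1 <;>
      rcases walkStep hw2 k (by omega) with h2 | h2 <;>
      · have hl := hlt ⟨k+1, by omega⟩
        rw [← extW_eq P.1 (k+1) (by omega), ← extW_eq P.2 (k+1) (by omega)] at hl
        omega

lemma melon_cnt_odd : ∀ k, k ≤ n →
    cnt (melonList n P) (2*k+1) = extW P.2 k - extW P.1 k - 1 := by
  obtain ⟨hw1, hw2, h10, h20, hend, hlt⟩ := hP
  intro k
  induction k with
  | zero =>
    intro _
    have h0 : cnt (melonList n P) 1 = cnt (melonList n P) 0 + eps (wstep n P 0) :=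
      cntM_succ n P 0 (by omega)
    rw [h0, cnt_zero, wstep_zero, extW_zero, extW_zero, h10, h20]
    simp [eps]
  | succ k ih =>
    intro hk
    have ih' := ih (by omega)
    have e1 : cnt (melonList n P) (2*k+2) =
        cnt (melonList n P) (2*k+1) + eps (wstep n P (2*k+1)) :=
      cntM_succ n P (2*k+1) (by omega)
    have e2 : cnt (melonList n P) (2*k+3) =
        cnt (melonList n P) (2*k+2) + eps (wstep n P (2*k+2)) :=
      cntM_succ n P (2*k+2) (by omega)
    have e3 : 2*(k+1)+1 = 2*k+3 := by ring
    rw [e3, e2, e1, ih', eps_wstep_odd n hw2 k (by omega), eps_wstep_even n hw1 k (by omega)]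
    ring

lemma melon_cnt_2n1 : cnt (melonList n P) (2*n+1) = 1 := by
  have h := melon_cnt_odd hP n le_rfl
  obtain ⟨hw1, hw2, h10, h20, hend, hlt⟩ := hP
  rw [h, extW_last, extW_last, hend]
  ring

lemma melon_cnt_top : cnt (melonList n P) (2*n+2) = 0 := by
  rw [cntM_succ n P (2*n+1) (by omega), melon_cnt_2n1 hP, wstep_big n P (2*n+1) (by omega)]
  simp [eps]

lemma melon_cnt_nonneg : ∀ i, i ≤ 2*n+2 → 0 ≤ cnt (melonList n P) i := by
  intro i hi
  rcases Nat.eq_zero_or_pos i with rfl | hpos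
  · rw [cnt_zero]
  rcases Nat.even_or_odd (i-1) with ⟨k, hk⟩ | ⟨k, hk⟩
  · -- i = 2k+1
    have hie : i = 2*k+1 := by omega
    subst hie
    have hkn : k ≤ n := by omega
    rw [melon_cnt_odd hP k hkn]
    have := (melon_gap hP k hkn).2
    omega
  · -- i = 2k+2
    have hie : i = 2*k+2 := by omega
    subst hie
    have hkn : k ≤ n := by omega
    rw [cntM_succ n P (2*k+1) (by omega), melon_cnt_odd hP k hkn]
    have := (melon_gap hP k hkn).2
    rcases eps_bound (wstep n P (2*k+1)) with h | h <;> omega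

lemma melon_hgt_zero : hgt (melonList n P) = 0 := by
  have := melon_cnt_top hP
  rwa [cnt_full _ _ (by rw [length_melonList])] at this

def melonWord : DyckWord where
  toList := melonList n P
  count_U_eq_count_D := by
    have h := melon_hgt_zero hP
    rw [hgt] at h
    omega
  count_D_le_count_U := by
    intro i
    rcases le_or_gt i (2*n+2) with hi | hi
    · have := melon_cnt_nonneg hP i hi
      rw [cnt, hgt] at this
      omega
    · rw [List.take_of_length_le (by rw [length_melonList]; omega)]
      have h := melon_hgt_zero hP
      rw [hgt] at h
      omega

lemma melonWord_semilength : (melonWord hP).semilength = n + 1 := by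
  have h := (melonWord hP).two_mul_semilength_eq_length
  have h2 : (melonWord hP).toList.length = 2*n+2 := length_melonList n P
  omega

end Forward

/-! ### The inverse map: Dyck word to melon -/

def letterOf (p : DyckWord) (i : ℕ) : DyckStep := p.toList.getD i U

lemma letterOf_eq (p : DyckWord) (i : ℕ) (h : i < p.toList.length) :
    letterOf p i = p.toList[i] := by
  rw [letterOf, List.getD_eq_getElem?_getD, List.getElem?_eq_getElem h, Option.getD_some]

def invL1 (p : DyckWord) (k : ℕ) : ℤ := ∑ j ∈ Finset.range k, -eps (letterOf p (2*j+2))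
def invL2 (p : DyckWord) (k : ℕ) : ℤ := 2 + ∑ j ∈ Finset.range k, eps (letterOf p (2*j+1))

def invMelon (n : ℕ) (p : DyckWord) : (Fin (n+1) → ℤ) × (Fin (n+1) → ℤ) :=
  (fun k => invL1 p k.val, fun k => invL2 p k.val)

lemma invL1_succ (p k) : invL1 p (k+1) = invL1 p k - eps (letterOf p (2*k+2)) := by
  rw [invL1, invL1, Finset.sum_range_succ]; ring
lemma invL2_succ (p k) : invL2 p (k+1) = invL2 p k + eps (letterOf p (2*k+1)) := by
  rw [invL2, invL2, Finset.sum_range_succ]; ring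

section Inverse

variable {n : ℕ} {p : DyckWord} (hlen : p.toList.length = 2*n+2)
include hlen

lemma cntP_succ (i : ℕ) (h : i < 2*n+2) :
    cnt p.toList (i+1) = cnt p.toList i + eps (letterOf p i) := by
  rw [cnt_succ _ i (by omega), letterOf_eq p i (by omega)]

lemma cntP_nonneg (i : ℕ) : 0 ≤ cnt p.toList i :=
  cnt_nonneg_of_counts _ p.count_D_le_count_U i

lemma letterOf_zero : letterOf p 0 = U := by
  have hne : p.toList ≠ [] := by intro h; rw [h] at hlen; simp at hlen
  rw [letterOf_eq p 0 (by omega), List.getElem_zero, p.head_eq_U]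

lemma cntP_one : cnt p.toList 1 = 1 := by
  rw [cntP_succ hlen 0 (by omega), cnt_zero, letterOf_zero hlen]
  simp [eps]

lemma cntP_top : cnt p.toList (2*n+2) = 0 := by
  rw [cnt_full _ _ (by omega), hgt, p.count_U_eq_count_D]
  ring

lemma letterOf_last : letterOf p (2*n+1) = D := by
  have hne : p.toList ≠ [] := by intro h; rw [h] at hlen; simp at hlen
  have h := p.getLast_eq_D hne
  rw [List.getLast_eq_getElem] at h
  rw [show 2*n+1 = p.toList.length - 1 by omega, letterOf_eq p _ (by omega)]
  exact h

lemma cntP_2n1 : cnt p.toList (2*n+1) = 1 := by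
  have h := cntP_succ hlen (2*n+1) (by omega)
  rw [cntP_top hlen, letterOf_last hlen] at h
  simp [eps] at h
  omega

lemma inv_gap : ∀ k, k ≤ n → invL2 p k - invL1 p k = cnt p.toList (2*k+1) + 1 := by
  intro k
  induction k with
  | zero =>
    intro _
    rw [invL1, invL2, cntP_one hlen]
    simp
  | succ k ih =>
    intro hk
    have ih' := ih (by omega)
    have e1 := cntP_succ hlen (2*k+1) (by omega)
    have e2 := cntP_succ hlen (2*k+2) (by omega)
    have e3 : 2*(k+1)+1 = 2*k+2+1 := by ring
    rw [invL1_succ, invL2_succ, e3, e2, e1]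
    linarith

lemma invMelon_mem : invMelon n p ∈ MelonSet n := by
  refine ⟨?_, ?_, ?_, ?_, ?_, ?_⟩
  · intro k
    show |invL1 p (k.succ).val - invL1 p (k.castSucc).val| = 1
    rw [Fin.val_succ, Fin.coe_castSucc, invL1_succ]
    rcases eps_bound (letterOf p (2*(k:ℕ)+2)) with h | h <;> rw [h] <;> norm_num
  · intro k
    show |invL2 p (k.succ).val - invL2 p (k.castSucc).val| = 1
    rw [Fin.val_succ, Fin.coe_castSucc, invL2_succ]
    rcases eps_bound (letterOf p (2*(k:ℕ)+1)) with h | h <;> rw [h] <;> norm_num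
  · show invL1 p (0 : Fin (n+1)).val = 0
    rw [Fin.val_zero, invL1]
    simp
  · show invL2 p (0 : Fin (n+1)).val = 2
    rw [Fin.val_zero, invL2]
    simp
  · show invL2 p (Fin.last n).val = invL1 p (Fin.last n).val + 2
    rw [Fin.val_last]
    have h := inv_gap hlen n le_rfl
    rw [cntP_2n1 hlen] at h
    omega
  · intro k
    show invL1 p k.val < invL2 p k.val
    have h := inv_gap hlen k.val (by omega)
    have h2 := cntP_nonneg hlen (2*k.val+1)
    omega

end Inverse

/-! ### Round trips -/

lemma left_inv_aux {n : ℕ} {P : (Fin (n+1) → ℤ) × (Fin (n+1) → ℤ)} (hP : P ∈ MelonSet n) :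
    invMelon n (melonWord hP) = P := by
  obtain ⟨hw1, hw2, h10, h20, hend, hlt⟩ := id hP
  have hletter : ∀ i, i < 2*n+2 → letterOf (melonWord hP) i = wstep n P i := by
    intro i hi
    rw [letterOf_eq _ i (by show i < (melonList n P).length; rw [length_melonList]; exact hi)]
    exact getElem_melonList n P i hi
  have hL1 : ∀ m, m ≤ n → invL1 (melonWord hP) m = extW P.1 m := by
    intro m
    induction m with
    | zero => intro _; rw [invL1, extW_zero, h10]; simp
    | succ m ih =>
      intro hm
      rw [invL1_succ, ih (by omega), hletter (2*m+2) (by omega),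
        eps_wstep_even n hw1 m (by omega)]
      ring
  have hL2 : ∀ m, m ≤ n → invL2 (melonWord hP) m = extW P.2 m := by
    intro m
    induction m with
    | zero => intro _; rw [invL2, extW_zero, h20]; simp
    | succ m ih =>
      intro hm
      rw [invL2_succ, ih (by omega), hletter (2*m+1) (by omega),
        eps_wstep_odd n hw2 m (by omega)]
      ring
  refine Prod.ext ?_ ?_
  · funext k
    show invL1 (melonWord hP) k.val = P.1 k
    rw [hL1 k.val (by omega), extW_fin]
  · funext k
    show invL2 (melonWord hP) k.val = P.2 k
    rw [hL2 k.val (by omega), extW_fin]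

lemma right_inv_aux {n : ℕ} {p : DyckWord} (hlen : p.toList.length = 2*n+2) :
    melonList n (invMelon n p) = p.toList := by
  set Q := invMelon n p with hQ
  have hex1 : ∀ m, m ≤ n → extW Q.1 m = invL1 p m := fun m hm => extW_eq _ m (by omega)
  have hex2 : ∀ m, m ≤ n → extW Q.2 m = invL2 p m := fun m hm => extW_eq _ m (by omega)
  apply List.ext_getElem
  · rw [hlen]; exact length_melonList n Q
  intro i h1 h2
  have hi : i < 2*n+2 := by rw [length_melonList] at h1; exact h1
  rw [getElem_melonList n Q i hi, ← letterOf_eq p i (by omega)]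
  rcases Nat.eq_zero_or_pos i with rfl | hpos
  · rw [wstep_zero, letterOf_zero hlen]
  rcases Nat.even_or_odd (i-1) with ⟨k, hk⟩ | ⟨k, hk⟩
  · -- i = 2k+1
    have hie : i = 2*k+1 := by omega
    subst hie
    rcases Nat.lt_or_ge k n with hkn | hkn
    · rw [wstep_odd n Q k hkn, hex2 (k+1) (by omega), hex2 k (by omega), invL2_succ]
      cases h : letterOf p (2*k+1) <;> simp [eps]
    · have hkn' : 2*k+1 = 2*n+1 := by omega
      rw [hkn', wstep_big n Q (2*n+1) (by omega), letterOf_last hlen]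
  · -- i = 2k+2
    have hie : i = 2*k+2 := by omega
    subst hie
    have hkn : k < n := by omega
    rw [wstep_even n Q k hkn, hex1 (k+1) (by omega), hex1 k (by omega), invL1_succ]
    cases h : letterOf p (2*k+2) <;> simp [eps]

/-! ### The equivalence and cardinality -/

noncomputable def melonEquiv (n : ℕ) :
    MelonSet n ≃ { p : DyckWord // p.semilength = n + 1 } where
  toFun := fun ⟨P, hP⟩ => ⟨melonWord hP, melonWord_semilength hP⟩
  invFun := fun ⟨p, hp⟩ => ⟨invMelon n p,
    invMelon_mem (by have := p.two_mul_semilength_eq_length; omega)⟩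
  left_inv := fun ⟨P, hP⟩ => Subtype.ext (left_inv_aux hP)
  right_inv := fun ⟨p, hp⟩ => Subtype.ext (DyckWord.ext
    (right_inv_aux (n := n) (by have := p.two_mul_semilength_eq_length; omega)))

lemma card_melonSet (n : ℕ) : Nat.card (MelonSet n) = catalan (n+1) := by
  rw [Nat.card_congr (melonEquiv n), Nat.card_eq_fintype_card,
    DyckWord.card_dyckWord_semilength_eq_catalan]

end Stmt10Aux

theorem stmt10 (n : ℕ) :
    (Nat.card (MelonSet n) : ℚ) = (Nat.choose (2 * n + 2) (n + 1) : ℚ) / (n + 2) := by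
  rw [Stmt10Aux.card_melonSet n, catalan_eq_centralBinom_div]
  have hd : (n + 1 + 1) ∣ (n+1).centralBinom := Nat.succ_dvd_centralBinom (n+1)
  rw [Nat.cast_div hd (by positivity)]
  rw [Nat.centralBinom, show 2*(n+1) = 2*n+2 by ring]
  push_cast
  ring
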